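/- Let A and B be bounded operators on a complex Hilbert space K, with associated systems of four subspaces 𝓢_A = (K ⊕ K; E₁, E₂, E₃(A), E₄) and 𝓢_B = (K ⊕ K; E₁, E₂, E₃(B), E₄), where E₁ = K ⊕ 0, E₂ = 0 ⊕ K, E₃(A) = {(x, Ax) : x ∈ K}, E₃(B) = {(x, Bx) : x ∈ K} and E₄ = {(y, y) : y ∈ K}. Then 𝓢_A and 𝓢_B are isomorphic — i.e., there exists an invertible bounded operator φ on K ⊕ K with φ(E₁) = E₁, φ(E₂) = E₂, φ(E₃(A)) = E₃(B) and φ(E₄) = E₄ — if and only if A and B are similar, i.e., there exists an invertible bounded operator W on K with WA = BW. -/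

import Mathlib

variable {K : Type*} [NormedAddCommGroup K] [InnerProductSpace ℂ K] [CompleteSpace K]

/-- `E₁ = K ⊕ 0` inside the Hilbert space direct sum `H = K ⊕ K`. -/
noncomputable def subE1 (K : Type*) [NormedAddCommGroup K] [InnerProductSpace ℂ K] :
    Submodule ℂ (WithLp 2 (K × K)) :=
  Submodule.comap (WithLp.linearEquiv 2 ℂ (K × K)).toLinearMap
    ((⊤ : Submodule ℂ K).prod (⊥ : Submodule ℂ K))

/-- `E₂ = 0 ⊕ K` inside `H = K ⊕ K`. -/
noncomputable def subE2 (K : Type*) [NormedAddCommGroup K] [InnerProductSpace ℂ K] :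
    Submodule ℂ (WithLp 2 (K × K)) :=
  Submodule.comap (WithLp.linearEquiv 2 ℂ (K × K)).toLinearMap
    ((⊥ : Submodule ℂ K).prod (⊤ : Submodule ℂ K))

/-- `E₃(A) = {(x, Ax) : x ∈ K}`, the graph of `A`, inside `H = K ⊕ K`. -/
noncomputable def subE3 {K : Type*} [NormedAddCommGroup K] [InnerProductSpace ℂ K]
    (A : K →L[ℂ] K) : Submodule ℂ (WithLp 2 (K × K)) :=
  Submodule.comap (WithLp.linearEquiv 2 ℂ (K × K)).toLinearMap
    (LinearMap.graph (A : K →ₗ[ℂ] K))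

/-- `E₄ = {(y, y) : y ∈ K}`, the diagonal, inside `H = K ⊕ K`. -/
noncomputable def subE4 (K : Type*) [NormedAddCommGroup K] [InnerProductSpace ℂ K] :
    Submodule ℂ (WithLp 2 (K × K)) :=
  Submodule.comap (WithLp.linearEquiv 2 ℂ (K × K)).toLinearMap
    (LinearMap.graph (LinearMap.id : K →ₗ[ℂ] K))

set_option linter.unusedSectionVars false

lemma mem_subE1_iff (x : WithLp 2 (K × K)) :
    x ∈ subE1 K ↔ (WithLp.equiv 2 (K × K) x).2 = 0 := by
  simp [subE1]

lemma mem_subE2_iff (x : WithLp 2 (K × K)) :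
    x ∈ subE2 K ↔ (WithLp.equiv 2 (K × K) x).1 = 0 := by
  simp [subE2]

lemma mem_subE3_iff (A : K →L[ℂ] K) (x : WithLp 2 (K × K)) :
    x ∈ subE3 A ↔ (WithLp.equiv 2 (K × K) x).2 = A (WithLp.equiv 2 (K × K) x).1 := by
  simp [subE3, LinearMap.mem_graph_iff]

lemma mem_subE4_iff (x : WithLp 2 (K × K)) :
    x ∈ subE4 K ↔ (WithLp.equiv 2 (K × K) x).2 = (WithLp.equiv 2 (K × K) x).1 := by
  simp [subE4, LinearMap.mem_graph_iff]

/-- The (1,1) corner of an operator on `K ⊕ K`. -/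
noncomputable def corner (φ : WithLp 2 (K × K) →L[ℂ] WithLp 2 (K × K)) : K →L[ℂ] K :=
  (ContinuousLinearMap.fst ℂ K K) ∘L
    ((WithLp.prodContinuousLinearEquiv 2 ℂ K K :
        WithLp 2 (K × K) →L[ℂ] K × K) ∘L
      (φ ∘L (((WithLp.prodContinuousLinearEquiv 2 ℂ K K).symm :
          K × K →L[ℂ] WithLp 2 (K × K)) ∘L (ContinuousLinearMap.inl ℂ K K))))

lemma corner_apply (φ : WithLp 2 (K × K) →L[ℂ] WithLp 2 (K × K)) (x : K) :
    corner φ x =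
      (WithLp.equiv 2 (K × K)
        (φ ((WithLp.equiv 2 (K × K)).symm (x, 0)))).1 := rfl

/-- **The systems of four subspaces `𝓢_A` and `𝓢_B` are isomorphic iff `A` and `B` are
similar.**  There is an invertible bounded operator `φ` on `H = K ⊕ K` with
`φ(E₁) = E₁`, `φ(E₂) = E₂`, `φ(E₃(A)) = E₃(B)`, `φ(E₄) = E₄` iff there is an invertible
bounded operator `W` on `K` with `W A = B W`. -/
theorem stmt_16 (A B : K →L[ℂ] K) :
    (∃ φ : WithLp 2 (K × K) ≃L[ℂ] WithLp 2 (K × K),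
      Submodule.map ((φ : WithLp 2 (K × K) →L[ℂ] WithLp 2 (K × K)) : WithLp 2 (K × K) →ₗ[ℂ] WithLp 2 (K × K)) (subE1 K) = subE1 K ∧
      Submodule.map ((φ : WithLp 2 (K × K) →L[ℂ] WithLp 2 (K × K)) : WithLp 2 (K × K) →ₗ[ℂ] WithLp 2 (K × K)) (subE2 K) = subE2 K ∧
      Submodule.map ((φ : WithLp 2 (K × K) →L[ℂ] WithLp 2 (K × K)) : WithLp 2 (K × K) →ₗ[ℂ] WithLp 2 (K × K)) (subE3 A) = subE3 B ∧
      Submodule.map ((φ : WithLp 2 (K × K) →L[ℂ] WithLp 2 (K × K)) : WithLp 2 (K × K) →ₗ[ℂ] WithLp 2 (K × K)) (subE4 K) = subE4 K)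
    ↔
    (∃ W : K →L[ℂ] K, IsUnit W ∧ W ∘L A = B ∘L W) := by
  constructor
  · rintro ⟨φ, h1, h2, h3, h4⟩
    have hmem : ∀ (S T : Submodule ℂ (WithLp 2 (K × K))),
        Submodule.map ((φ : WithLp 2 (K × K) →L[ℂ] WithLp 2 (K × K)) : WithLp 2 (K × K) →ₗ[ℂ] WithLp 2 (K × K)) S = T →
        ∀ z ∈ S, φ z ∈ T := by
      intro S T h z hz
      rw [← h]
      exact ⟨z, hz, rfl⟩
    have hmem' : ∀ (S T : Submodule ℂ (WithLp 2 (K × K))),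
        Submodule.map ((φ : WithLp 2 (K × K) →L[ℂ] WithLp 2 (K × K)) : WithLp 2 (K × K) →ₗ[ℂ] WithLp 2 (K × K)) S = T →
        ∀ z ∈ T, φ.symm z ∈ S := by
      intro S T h z hz
      rw [← h] at hz
      obtain ⟨w, hw, rfl⟩ := hz
      simpa using hw
    set W := corner (φ : WithLp 2 (K × K) →L[ℂ] WithLp 2 (K × K)) with hWdef
    set W' := corner (φ.symm : WithLp 2 (K × K) →L[ℂ] WithLp 2 (K × K)) with hW'def
    have key1 : ∀ x : K, φ ((WithLp.equiv 2 (K × K)).symm (x, 0)) =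
        (WithLp.equiv 2 (K × K)).symm (W x, 0) := by
      intro x
      have h0 : ((WithLp.equiv 2 (K × K)).symm (x, 0)) ∈ subE1 K := by simp [mem_subE1_iff]
      have h0' := hmem _ _ h1 _ h0
      rw [mem_subE1_iff] at h0'
      have hcoord : WithLp.equiv 2 (K × K) (φ ((WithLp.equiv 2 (K × K)).symm (x, 0)))
          = (W x, 0) := by
        rw [hWdef, corner_apply]
        exact Prod.ext rfl h0'
      simpa using congrArg (WithLp.equiv 2 (K × K)).symm hcoord
    have key1' : ∀ x : K, φ.symm ((WithLp.equiv 2 (K × K)).symm (x, 0)) =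
        (WithLp.equiv 2 (K × K)).symm (W' x, 0) := by
      intro x
      have h0 : ((WithLp.equiv 2 (K × K)).symm (x, 0)) ∈ subE1 K := by simp [mem_subE1_iff]
      have h0' := hmem' _ _ h1 _ h0
      rw [mem_subE1_iff] at h0'
      have hcoord : WithLp.equiv 2 (K × K) (φ.symm ((WithLp.equiv 2 (K × K)).symm (x, 0)))
          = (W' x, 0) := by
        rw [hW'def, corner_apply]
        exact Prod.ext rfl h0'
      simpa using congrArg (WithLp.equiv 2 (K × K)).symm hcoord
    have key2 : ∀ x : K, φ ((WithLp.equiv 2 (K × K)).symm (0, x)) =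
        (WithLp.equiv 2 (K × K)).symm (0, W x) := by
      intro x
      have h0 : ((WithLp.equiv 2 (K × K)).symm (0, x)) ∈ subE2 K := by simp [mem_subE2_iff]
      have h0' := hmem _ _ h2 _ h0
      rw [mem_subE2_iff] at h0'
      have hsplit : (WithLp.equiv 2 (K × K)).symm ((x : K), (x : K)) =
          (WithLp.equiv 2 (K × K)).symm (x, 0) + (WithLp.equiv 2 (K × K)).symm (0, x) := by
        rw [← (show ∀ a b : K × K, (WithLp.equiv 2 (K × K)).symm (a + b) = (WithLp.equiv 2 (K × K)).symm a + (WithLp.equiv 2 (K × K)).symm b from fun _ _ => rfl)]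
        norm_num
      have hd : φ ((WithLp.equiv 2 (K × K)).symm (x, x)) ∈ subE4 K := by
        apply hmem _ _ h4
        simp [mem_subE4_iff]
      rw [hsplit, map_add, key1, mem_subE4_iff] at hd
      simp only [(show ∀ a b : WithLp 2 (K × K), WithLp.equiv 2 (K × K) (a + b) = WithLp.equiv 2 (K × K) a + WithLp.equiv 2 (K × K) b from fun _ _ => rfl), Equiv.apply_symm_apply, Prod.fst_add, Prod.snd_add,
        h0', add_zero, zero_add] at hd
      have hcoord : WithLp.equiv 2 (K × K) (φ ((WithLp.equiv 2 (K × K)).symm (0, x)))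
          = (0, W x) := Prod.ext h0' hd
      simpa using congrArg (WithLp.equiv 2 (K × K)).symm hcoord
    have hWW' : ∀ x : K, W' (W x) = x := by
      intro x
      have h5 := key1' (W x)
      rw [← key1 x, ContinuousLinearEquiv.symm_apply_apply] at h5
      have h6 := congrArg (fun z => (WithLp.equiv 2 (K × K) z).1) h5
      simpa using h6.symm
    have hW'W : ∀ x : K, W (W' x) = x := by
      intro x
      have h5 := key1 (W' x)
      rw [← key1' x, ContinuousLinearEquiv.apply_symm_apply] at h5
      have h6 := congrArg (fun z => (WithLp.equiv 2 (K × K) z).1) h5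
      simpa using h6.symm
    refine ⟨W, ?_, ?_⟩
    · refine isUnit_iff_exists.mpr ⟨W', ?_, ?_⟩
      · ext x
        simp [ContinuousLinearMap.mul_apply, hW'W x]
      · ext x
        simp [ContinuousLinearMap.mul_apply, hWW' x]
    · ext x
      have hsplit : (WithLp.equiv 2 (K × K)).symm ((x : K), A x) =
          (WithLp.equiv 2 (K × K)).symm (x, 0) + (WithLp.equiv 2 (K × K)).symm (0, A x) := by
        rw [← (show ∀ a b : K × K, (WithLp.equiv 2 (K × K)).symm (a + b) = (WithLp.equiv 2 (K × K)).symm a + (WithLp.equiv 2 (K × K)).symm b from fun _ _ => rfl)]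
        norm_num
      have hg : φ ((WithLp.equiv 2 (K × K)).symm (x, A x)) ∈ subE3 B := by
        apply hmem _ _ h3
        simp [mem_subE3_iff]
      rw [hsplit, map_add, key1, key2, mem_subE3_iff] at hg
      simp only [(show ∀ a b : WithLp 2 (K × K), WithLp.equiv 2 (K × K) (a + b) = WithLp.equiv 2 (K × K) a + WithLp.equiv 2 (K × K) b from fun _ _ => rfl), Equiv.apply_symm_apply, Prod.fst_add, Prod.snd_add,
        add_zero, zero_add] at hg
      simpa using hg
  · rintro ⟨W, hW, hc⟩
    have hc' : ∀ x : K, W (A x) = B (W x) := fun x => DFunLike.congr_fun hc x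
    lift W to (K →L[ℂ] K)ˣ using hW with u hu
    set e := ContinuousLinearEquiv.unitsEquiv ℂ K u with he
    have he' : ∀ x : K, e x = (u : K →L[ℂ] K) x := fun _ => rfl
    have hce : ∀ x : K, e (A x) = B (e x) := fun x => by rw [he', he']; exact hc' x
    have hce' : ∀ v : K, A (e.symm v) = e.symm (B v) := by
      intro v
      apply e.injective
      rw [hce, e.apply_symm_apply, e.apply_symm_apply]
    set p := WithLp.prodContinuousLinearEquiv 2 ℂ K K with hp
    set φ := p.trans ((e.prodCongr e).trans p.symm) with hφ
    have hφap : ∀ z : WithLp 2 (K × K),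
        WithLp.equiv 2 (K × K) (φ z) =
          (e ((WithLp.equiv 2 (K × K)) z).1, e ((WithLp.equiv 2 (K × K)) z).2) := fun z => rfl
    have hφsym : ∀ z : WithLp 2 (K × K),
        WithLp.equiv 2 (K × K) (φ.symm z) =
          (e.symm ((WithLp.equiv 2 (K × K)) z).1, e.symm ((WithLp.equiv 2 (K × K)) z).2) :=
      fun z => rfl
    refine ⟨φ, ?_, ?_, ?_, ?_⟩
    · ext z
      simp only [Submodule.mem_map]
      constructor
      · rintro ⟨y, hy, rfl⟩
        rw [mem_subE1_iff] at hy ⊢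
        show (WithLp.equiv 2 (K × K) (φ y)).2 = 0
        rw [hφap, hy]
        simp
      · intro hz
        rw [mem_subE1_iff] at hz
        refine ⟨φ.symm z, ?_, by simp⟩
        rw [mem_subE1_iff, hφsym, hz]
        simp
    · ext z
      simp only [Submodule.mem_map]
      constructor
      · rintro ⟨y, hy, rfl⟩
        rw [mem_subE2_iff] at hy ⊢
        show (WithLp.equiv 2 (K × K) (φ y)).1 = 0
        rw [hφap, hy]
        simp
      · intro hz
        rw [mem_subE2_iff] at hz
        refine ⟨φ.symm z, ?_, by simp⟩
        rw [mem_subE2_iff, hφsym, hz]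
        simp
    · ext z
      simp only [Submodule.mem_map]
      constructor
      · rintro ⟨y, hy, rfl⟩
        rw [mem_subE3_iff] at hy ⊢
        show (WithLp.equiv 2 (K × K) (φ y)).2 = B (WithLp.equiv 2 (K × K) (φ y)).1
        rw [hφap, hy]
        exact hce _
      · intro hz
        rw [mem_subE3_iff] at hz
        refine ⟨φ.symm z, ?_, by simp⟩
        rw [mem_subE3_iff, hφsym]
        show e.symm ((WithLp.equiv 2 (K × K)) z).2 = A (e.symm ((WithLp.equiv 2 (K × K)) z).1)
        rw [hz, hce']
    · ext z
      simp only [Submodule.mem_map]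
      constructor
      · rintro ⟨y, hy, rfl⟩
        rw [mem_subE4_iff] at hy ⊢
        show (WithLp.equiv 2 (K × K) (φ y)).2 = (WithLp.equiv 2 (K × K) (φ y)).1
        rw [hφap, hy]
      · intro hz
        rw [mem_subE4_iff] at hz
        refine ⟨φ.symm z, ?_, by simp⟩
        rw [mem_subE4_iff, hφsym, hz]
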